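/- Let A = 1 − q·m and suppose A > 0 and A² − 4h = 0 (so A/2 = √h). Then the Fréchet derivative of F at E₄ = (√h, m) is the linear map given by the matrix [[0, −q·√h], [0, s·m·(1 − m/√h)]]; in particular this matrix has eigenvalues 0 and s·m·(1 − m/√h), and if m ≠ √h the second eigenvalue is nonzero. -/

import Mathlib

/-- The predator–prey vector field
    `F(x,y) = (x(1-x) - q x y - h, s y (1 - y/x)(y - m))`. -/
noncomputable def F (q s h m : ℝ) (p : ℝ × ℝ) : ℝ × ℝ :=
  (p.1 * (1 - p.1) - q * p.1 * p.2 - h, s * p.2 * (1 - p.2 / p.1) * (p.2 - m))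

/-- The continuous linear map `ℝ² → ℝ²` with matrix `[[a, b], [c, d]]`. -/
noncomputable def clm (a b c d : ℝ) : (ℝ × ℝ) →L[ℝ] (ℝ × ℝ) :=
  (a • ContinuousLinearMap.fst ℝ ℝ ℝ + b • ContinuousLinearMap.snd ℝ ℝ ℝ).prod
    (c • ContinuousLinearMap.fst ℝ ℝ ℝ + d • ContinuousLinearMap.snd ℝ ℝ ℝ)

/-- An upper-triangular `2×2` matrix `!![0,b;0,d]` has `x` in its spectrum
whenever `x (x - d) = 0`. -/
lemma mem_spec_aux (b d x : ℝ) (hx : x * (x - d) = 0) :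
    x ∈ spectrum ℝ (!![0, b; 0, d] : Matrix (Fin 2) (Fin 2) ℝ) := by
  rw [spectrum.mem_iff]
  intro hu
  rw [Matrix.isUnit_iff_isUnit_det, isUnit_iff_ne_zero] at hu
  apply hu
  show _ = (0:ℝ)
  rw [Matrix.det_fin_two]
  simp [Matrix.sub_apply, Matrix.algebraMap_matrix_apply]
  rcases mul_eq_zero.mp hx with h1 | h1
  · left; exact h1
  · right; linarith

/-- The derivative computation for `F` at `(a, m)` with `1 - q m = 2 a`. -/
lemma hasFDerivAt_aux (q s h m a : ℝ) (ha : 0 < a) (key : 1 - q*m = 2*a) :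
    HasFDerivAt (F q s h m) (clm 0 (-q*a) 0 (s*m*(1 - m/a))) ((a, m) : ℝ × ℝ) := by
  have hx : HasFDerivAt (fun p : ℝ × ℝ => p.1) (ContinuousLinearMap.fst ℝ ℝ ℝ) (a, m) :=
    hasFDerivAt_fst
  have hy : HasFDerivAt (fun p : ℝ × ℝ => p.2) (ContinuousLinearMap.snd ℝ ℝ ℝ) (a, m) :=
    hasFDerivAt_snd
  have h1 := ((hx.mul ((hasFDerivAt_const (1:ℝ) _).sub hx)).sub
      (((hasFDerivAt_const q _).mul hx).mul hy)).sub (hasFDerivAt_const h _)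
  have hinv := (hasFDerivAt_inv (x := (a,m).1) ha.ne').comp ((a,m) : ℝ × ℝ) hx
  have h2 := ((((hasFDerivAt_const s _).mul hy).mul
      ((hasFDerivAt_const (1:ℝ) _).sub (hy.mul hinv))).mul
      (hy.sub (hasFDerivAt_const m _)))
  have hF := h1.prodMk h2
  have hFeq : F q s h m = fun p : ℝ × ℝ =>
      (p.1 * (1 - p.1) - q * p.1 * p.2 - h,
       s * p.2 * (1 - p.2 * (fun p : ℝ × ℝ => p.1⁻¹) p) * (p.2 - m)) := by
    funext p; simp [F, div_eq_mul_inv]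
  rw [hFeq]
  refine hF.congr_fderiv (Eq.symm ?_)
  refine ContinuousLinearMap.ext fun v => Prod.ext ?_ ?_
  · simp [clm, div_eq_mul_inv]
    linear_combination (-v.1) * key
  · simp [clm, div_eq_mul_inv]

/-- With `A = 1 - q m > 0` and `A² - 4h = 0` (so `A/2 = √h`), the Fréchet derivative of
`F` at `E₄ = (√h, m)` is the linear map with matrix `[[0, -q√h], [0, s m (1 - m/√h)]]`;
this matrix has eigenvalues `0` and `s m (1 - m/√h)`, and if `m ≠ √h` the second
eigenvalue is nonzero. -/
theorem stmt8 (q s h m : ℝ) (hq : 0 < q) (hs : 0 < s) (hh : 0 < h)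
    (hm0 : 0 < m) (hm1 : m < 1) (hA : 0 < 1 - q*m) (hΔ : (1 - q*m)^2 - 4*h = 0) :
    (1 - q*m)/2 = Real.sqrt h ∧
    HasFDerivAt (F q s h m)
      (clm 0 (-q*Real.sqrt h) 0 (s*m*(1 - m/Real.sqrt h))) ((Real.sqrt h, m) : ℝ × ℝ) ∧
    (0 : ℝ) ∈ spectrum ℝ
      (!![0, -q*Real.sqrt h; 0, s*m*(1 - m/Real.sqrt h)] : Matrix (Fin 2) (Fin 2) ℝ) ∧
    (s*m*(1 - m/Real.sqrt h)) ∈ spectrum ℝ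
      (!![0, -q*Real.sqrt h; 0, s*m*(1 - m/Real.sqrt h)] : Matrix (Fin 2) (Fin 2) ℝ) ∧
    (m ≠ Real.sqrt h → s*m*(1 - m/Real.sqrt h) ≠ 0) := by
  have h1 : (1 - q*m)/2 = Real.sqrt h := by
    rw [show h = ((1 - q*m)/2)^2 by nlinarith, Real.sqrt_sq (by linarith)]
  have ha : 0 < Real.sqrt h := Real.sqrt_pos.mpr hh
  have key : 1 - q*m = 2 * Real.sqrt h := by linarith [h1]
  refine ⟨h1, hasFDerivAt_aux q s h m _ ha key, mem_spec_aux _ _ _ (by ring),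
    mem_spec_aux _ _ _ (by ring), fun hne => ?_⟩
  have : 1 - m / Real.sqrt h ≠ 0 := by
    rw [sub_ne_zero]
    intro hcon
    exact hne ((div_eq_one_iff_eq ha.ne').mp hcon.symm)
  positivity
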